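/- Every group of order 24 is multifold-factorizable. -/

import Mathlib

open Pointwise

/-- A finite group `G` has a `k`-fold factorization of the form `(a 0, …, a (k-1))`:
there are subsets `A 0, …, A (k-1)` of `G` with `|A i| = a i`, `|G| = a 0 ⋯ a (k-1)`,
and the setwise product `A 0 ⋯ A (k-1)` equals `G`. -/
def HasFactorization (G : Type*) [Group G] {k : ℕ} (a : Fin k → ℕ) : Prop :=
  ∃ A : Fin k → Set G,
    (∀ i, Nat.card (A i) = a i) ∧
    Nat.card G = ∏ i, a i ∧
    (List.ofFn A).prod = (Set.univ : Set G)

/-- `G` is `k`-factorizable: for every factorization `|G| = a 1 ⋯ a k` into integers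
`a i > 1`, `G` has a `k`-fold factorization of the form `(a 1, …, a k)`. -/
def IsKFactorizable (G : Type*) [Group G] (k : ℕ) : Prop :=
  ∀ a : Fin k → ℕ, (∀ i, 1 < a i) → Nat.card G = ∏ i, a i → HasFactorization G a

/-- `G` is multifold-factorizable if it is `k`-factorizable for every `k ≥ 2`. -/
def IsMultifoldFactorizable (G : Type*) [Group G] : Prop :=
  ∀ k : ℕ, 2 ≤ k → IsKFactorizable G k

section Machinery

variable {G : Type*} [Group G]

def ExFac (G : Type*) [Group G] (l : List ℕ) : Prop :=
  ∃ A : List (Set G), A.map (fun s => Nat.card (s : Set G)) = l ∧ Nat.card G = l.prod ∧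
    A.prod = (Set.univ : Set G)

lemma image_list_prod {M N : Type*} [Monoid M] [Monoid N] (f : M →* N) :
    ∀ (A : List (Set M)), (A.map (fun s => f '' s)).prod = f '' A.prod
  | [] => by
      simp only [List.map_nil, List.prod_nil, Set.image_one, map_one]
      rfl
  | s :: A => by
      simp only [List.map_cons, List.prod_cons, Set.image_mul, image_list_prod f A]

lemma exfac_single {n : ℕ} (h : Nat.card G = n) : ExFac G [n] :=
  ⟨[Set.univ], by simp [← h, Nat.card_univ], by simp [h], by simp⟩

lemma card_coe_image (H : Subgroup G) (s : Set H) :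
    Nat.card ((fun x : H => (x : G)) '' s) = Nat.card s :=
  Nat.card_image_of_injective Subtype.val_injective s

lemma exfacL [Finite G] (H : Subgroup G) {l : List ℕ} (h : ExFac H l) :
    ExFac G (H.index :: l) := by
  obtain ⟨A, hmap, hcard, hprod⟩ := h
  obtain ⟨S, hS, -⟩ := H.exists_isComplement_left 1
  refine ⟨S :: A.map (fun s => (H.subtype : H → G) '' s), ?_, ?_, ?_⟩
  · simp only [List.map_cons, List.map_map]
    congr 1
    · exact hS.card_left
    · rw [← hmap]
      congr 1
      ext s
      exact card_coe_image H s
  · rw [List.prod_cons, ← hcard, ← H.card_mul_index, mul_comm]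
  · rw [List.prod_cons, image_list_prod H.subtype A, hprod]
    have : (H.subtype : H → G) '' Set.univ = (H : Set G) := by
      rw [Set.image_univ]
      exact Subtype.range_coe
    rw [this]
    exact hS.mul_eq

lemma exfacR [Finite G] (H : Subgroup G) {l : List ℕ} (h : ExFac H l) :
    ExFac G (l ++ [H.index]) := by
  obtain ⟨A, hmap, hcard, hprod⟩ := h
  obtain ⟨S, hS, -⟩ := H.exists_isComplement_right 1
  refine ⟨A.map (fun s => (H.subtype : H → G) '' s) ++ [S], ?_, ?_, ?_⟩
  · simp only [List.map_append, List.map_map, List.map_cons, List.map_nil]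
    congr 1
    · rw [← hmap]; congr 1; ext s; exact card_coe_image H s
    · simp [hS.card_right]
  · rw [List.prod_append, List.prod_cons, List.prod_nil, mul_one, ← hcard,
      ← H.card_mul_index]
  · rw [List.prod_append, List.prod_cons, List.prod_nil, mul_one,
      image_list_prod H.subtype A, hprod]
    have : (H.subtype : H → G) '' Set.univ = (H : Set G) := by
      rw [Set.image_univ]; exact Subtype.range_coe
    rw [this]
    exact hS.mul_eq

lemma out_image_card (N : Subgroup G) [N.Normal] (s : Set (G ⧸ N)) :
    Nat.card ((fun q : G ⧸ N => (q.out : G)) '' s) = Nat.card s :=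
  Nat.card_image_of_injective (fun a b hab => by
    rw [← QuotientGroup.out_eq' a, ← QuotientGroup.out_eq' b, hab]) s

lemma mk_out_image (N : Subgroup G) [N.Normal] (s : Set (G ⧸ N)) :
    (QuotientGroup.mk' N : G → G ⧸ N) '' ((fun q : G ⧸ N => (q.out : G)) '' s) = s := by
  rw [Set.image_image]
  convert Set.image_id s using 2 with q
  exact QuotientGroup.out_eq' q

lemma exfacN_cons [Finite G] (N : Subgroup G) [N.Normal] {l : List ℕ}
    (h : ExFac (G ⧸ N) l) : ExFac G (Nat.card N :: l) := by
  obtain ⟨A, hmap, hcard, hprod⟩ := h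
  refine ⟨(N : Set G) :: A.map (fun s => (fun q : G ⧸ N => (q.out : G)) '' s), ?_, ?_, ?_⟩
  · simp only [List.map_cons, List.map_map]
    congr 1
    rw [← hmap]; congr 1; ext s; exact out_image_card N s
  · rw [List.prod_cons, ← hcard, Subgroup.card_eq_card_quotient_mul_card_subgroup N, mul_comm]
  · rw [List.prod_cons]
    have himg : (QuotientGroup.mk' N : G → G ⧸ N) ''
        ((A.map (fun s => (fun q : G ⧸ N => (q.out : G)) '' s)).prod) = Set.univ := by
      rw [← image_list_prod (QuotientGroup.mk' N), List.map_map]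
      have : ((fun s => (QuotientGroup.mk' N : G → G ⧸ N) '' s) ∘
          fun s => (fun q : G ⧸ N => (q.out : G)) '' s) = id := by
        funext s
        exact mk_out_image N s
      rw [this, List.map_id, hprod]
    ext g
    simp only [Set.mem_univ, iff_true]
    have hg : (QuotientGroup.mk' N) g ∈ (QuotientGroup.mk' N : G → G ⧸ N) ''
        ((A.map (fun s => (fun q : G ⧸ N => (q.out : G)) '' s)).prod) := by
      rw [himg]; trivial
    obtain ⟨x, hx, hxg⟩ := hg
    have hmem : x⁻¹ * g ∈ N := QuotientGroup.eq.mp hxg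
    refine ⟨g * x⁻¹, ?_, x, hx, by group⟩
    have : g * x⁻¹ = g * (x⁻¹ * g) * g⁻¹ := by group
    rw [this]
    exact Subgroup.Normal.conj_mem ‹N.Normal› _ hmem g

lemma exfacN_snoc [Finite G] (N : Subgroup G) [N.Normal] {l : List ℕ}
    (h : ExFac (G ⧸ N) l) : ExFac G (l ++ [Nat.card N]) := by
  obtain ⟨A, hmap, hcard, hprod⟩ := h
  refine ⟨A.map (fun s => (fun q : G ⧸ N => (q.out : G)) '' s) ++ [(N : Set G)], ?_, ?_, ?_⟩
  · simp only [List.map_append, List.map_map, List.map_cons, List.map_nil]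
    congr 1
    rw [← hmap]; congr 1; ext s; exact out_image_card N s
  · rw [List.prod_append, List.prod_cons, List.prod_nil, mul_one, ← hcard,
      Subgroup.card_eq_card_quotient_mul_card_subgroup N]
  · rw [List.prod_append, List.prod_cons, List.prod_nil, mul_one]
    have himg : (QuotientGroup.mk' N : G → G ⧸ N) ''
        ((A.map (fun s => (fun q : G ⧸ N => (q.out : G)) '' s)).prod) = Set.univ := by
      rw [← image_list_prod (QuotientGroup.mk' N), List.map_map]
      have : ((fun s => (QuotientGroup.mk' N : G → G ⧸ N) '' s) ∘
          fun s => (fun q : G ⧸ N => (q.out : G)) '' s) = id := by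
        funext s
        exact mk_out_image N s
      rw [this, List.map_id, hprod]
    ext g
    simp only [Set.mem_univ, iff_true]
    have hg : (QuotientGroup.mk' N) g ∈ (QuotientGroup.mk' N : G → G ⧸ N) ''
        ((A.map (fun s => (fun q : G ⧸ N => (q.out : G)) '' s)).prod) := by
      rw [himg]; trivial
    obtain ⟨x, hx, hxg⟩ := hg
    have hmem : x⁻¹ * g ∈ N := QuotientGroup.eq.mp hxg
    exact ⟨x, hx, x⁻¹ * g, hmem, by group⟩

lemma card_index_helper [Finite G] {m n : ℕ} (hG : Nat.card G = n * m)
    (H : Subgroup G) (hH : Nat.card H = m) : H.index = n := by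
  have h1 : Nat.card H * H.index = Nat.card G := H.card_mul_index
  have hm : 0 < m := hH ▸ Nat.card_pos
  rw [hH, hG] at h1
  exact Nat.eq_of_mul_eq_mul_left hm (h1.trans (mul_comm n m))

lemma exfacL' [Finite G] {m n : ℕ} (hG : Nat.card G = n * m)
    (H : Subgroup G) (hH : Nat.card H = m) {l : List ℕ} (hl : ExFac H l) :
    ExFac G (n :: l) := by
  have := exfacL H hl
  rwa [card_index_helper hG H hH] at this

lemma exfacR' [Finite G] {m n : ℕ} (hG : Nat.card G = m * n)
    (H : Subgroup G) (hH : Nat.card H = m) {l : List ℕ} (hl : ExFac H l) :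
    ExFac G (l ++ [n]) := by
  have := exfacR H hl
  rwa [card_index_helper (by rw [hG, mul_comm] : Nat.card G = n * m) H hH] at this

lemma exists_subgroup_card [Finite G] {p n : ℕ} (hp : p.Prime)
    (h : p ^ n ∣ Nat.card G) : ∃ H : Subgroup G, Nat.card H = p ^ n :=
  haveI := Fact.mk hp
  Sylow.exists_subgroup_card_pow_prime p h

lemma finite_of_card {H : Type*} [Group H] {n : ℕ} (h : Nat.card H = n) (hn : n ≠ 0) :
    Finite H := Nat.finite_of_card_ne_zero (h ▸ hn)

-- groups of order 4
lemma ex4 {H : Type*} [Group H] (h : Nat.card H = 4) : ExFac H [2, 2] := by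
  haveI : Finite H := finite_of_card h (by norm_num)
  obtain ⟨K, hK⟩ := exists_subgroup_card (G := H) Nat.prime_two (n := 1) (by rw [h]; norm_num)
  exact exfacL' (m := 2) (n := 2) (by omega) K (by simpa using hK) (exfac_single (by simpa using hK))

-- groups of order 6
lemma ex6a {H : Type*} [Group H] (h : Nat.card H = 6) : ExFac H [2, 3] := by
  haveI : Finite H := finite_of_card h (by norm_num)
  obtain ⟨K, hK⟩ := exists_subgroup_card (G := H) Nat.prime_three (n := 1) (by rw [h]; norm_num)
  exact exfacL' (m := 3) (n := 2) (by omega) K (by simpa using hK) (exfac_single (by simpa using hK))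

lemma ex6b {H : Type*} [Group H] (h : Nat.card H = 6) : ExFac H [3, 2] := by
  haveI : Finite H := finite_of_card h (by norm_num)
  obtain ⟨K, hK⟩ := exists_subgroup_card (G := H) Nat.prime_two (n := 1) (by rw [h]; norm_num)
  exact exfacL' (m := 2) (n := 3) (by omega) K (by simpa using hK) (exfac_single (by simpa using hK))

-- groups of order 8
lemma ex8a {H : Type*} [Group H] (h : Nat.card H = 8) : ExFac H [2, 4] := by
  haveI : Finite H := finite_of_card h (by norm_num)
  obtain ⟨K, hK⟩ := exists_subgroup_card (G := H) Nat.prime_two (n := 2) (by rw [h]; norm_num)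
  exact exfacL' (m := 4) (n := 2) (by omega) K (by simpa using hK) (exfac_single (by simpa using hK))

lemma ex8b {H : Type*} [Group H] (h : Nat.card H = 8) : ExFac H [4, 2] := by
  haveI : Finite H := finite_of_card h (by norm_num)
  obtain ⟨K, hK⟩ := exists_subgroup_card (G := H) Nat.prime_two (n := 1) (by rw [h]; norm_num)
  exact exfacL' (m := 2) (n := 4) (by omega) K (by simpa using hK) (exfac_single (by simpa using hK))

lemma ex8c {H : Type*} [Group H] (h : Nat.card H = 8) : ExFac H [2, 2, 2] := by
  haveI : Finite H := finite_of_card h (by norm_num)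
  obtain ⟨K, hK⟩ := exists_subgroup_card (G := H) Nat.prime_two (n := 2) (by rw [h]; norm_num)
  exact exfacL' (m := 4) (n := 2) (by omega) K (by simpa using hK) (ex4 (by simpa using hK))

-- groups of order 12
lemma ex12a {H : Type*} [Group H] (h : Nat.card H = 12) : ExFac H [6, 2] := by
  haveI : Finite H := finite_of_card h (by norm_num)
  obtain ⟨K, hK⟩ := exists_subgroup_card (G := H) Nat.prime_two (n := 1) (by rw [h]; norm_num)
  exact exfacL' (m := 2) (n := 6) (by omega) K (by simpa using hK) (exfac_single (by simpa using hK))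

lemma ex12b {H : Type*} [Group H] (h : Nat.card H = 12) : ExFac H [2, 2, 3] := by
  haveI : Finite H := finite_of_card h (by norm_num)
  obtain ⟨K, hK⟩ := exists_subgroup_card (G := H) Nat.prime_two (n := 2) (by rw [h]; norm_num)
  exact exfacR' (m := 4) (n := 3) (by omega) K (by simpa using hK) (ex4 (by simpa using hK))

lemma ex12c {H : Type*} [Group H] (h : Nat.card H = 12) : ExFac H [3, 2, 2] := by
  haveI : Finite H := finite_of_card h (by norm_num)
  obtain ⟨K, hK⟩ := exists_subgroup_card (G := H) Nat.prime_two (n := 2) (by rw [h]; norm_num)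
  exact exfacL' (m := 4) (n := 3) (by omega) K (by simpa using hK) (ex4 (by simpa using hK))

lemma fac24 : Nat.factorization 24 3 = 1 := by
  have h : (24:ℕ) = 2^3 * 3 := by norm_num
  rw [h, Nat.factorization_mul (by norm_num) (by norm_num),
    Nat.Prime.factorization_pow (by norm_num), Nat.Prime.factorization (by norm_num)]
  simp

lemma key24 [Finite G] (h24 : Nat.card G = 24) :
    (∃ H : Subgroup G, Nat.card H = 6) ∧
      ((∃ H : Subgroup G, Nat.card H = 12) ∨
        (∃ N : Subgroup G, N.Normal ∧ Nat.card N = 2)) := by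
  haveI := Fact.mk Nat.prime_three
  obtain ⟨Q⟩ : Nonempty (Sylow 3 G) := Sylow.nonempty
  have hsyl : ∀ R : Sylow 3 G, Nat.card (R : Subgroup G) = 3 := by
    intro R
    rw [R.card_eq_multiplicity, h24, fac24, pow_one]
  have hQ3 : Nat.card (Q : Subgroup G) = 3 := hsyl Q
  have hQi : (Q : Subgroup G).index = 8 :=
    card_index_helper (by omega) (Q : Subgroup G) hQ3
  have hmod : Nat.card (Sylow 3 G) ≡ 1 [MOD 3] := card_sylow_modEq_one 3 G
  have hdvd : Nat.card (Sylow 3 G) ∣ 8 := hQi ▸ Q.card_dvd_index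
  have h14 : Nat.card (Sylow 3 G) = 1 ∨ Nat.card (Sylow 3 G) = 4 := by
    have h1 : 0 < Nat.card (Sylow 3 G) := Nat.card_pos
    have h8 : Nat.card (Sylow 3 G) ≤ 8 := Nat.le_of_dvd (by norm_num) hdvd
    interval_cases h : Nat.card (Sylow 3 G) <;>
      simp_all [Nat.ModEq] <;> omega
  rcases h14 with hn1 | hn4
  · -- Sylow 3 is normal
    have hnorm : (Subgroup.normalizer (Q : Set G)).index = 1 := by
      rw [← Q.card_eq_index_normalizer, hn1]
    haveI : (Q : Subgroup G).Normal :=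
      Subgroup.normalizer_eq_top_iff.mp (Subgroup.index_eq_one.mp hnorm)
    have hcq : Nat.card (G ⧸ (Q : Subgroup G)) = 8 := by
      have := Subgroup.card_eq_card_quotient_mul_card_subgroup (Q : Subgroup G)
      rw [h24, hQ3] at this
      omega
    haveI : Finite (G ⧸ (Q : Subgroup G)) := finite_of_card hcq (by norm_num)
    have hcomap : ∀ m n : ℕ, 8 = m * n → m ≠ 0 → (2:ℕ)^2 % m = 0 → True := fun _ _ _ _ _ => trivial
    have get : ∀ k i : ℕ, (2:ℕ) ^ k * i = 8 → i ≠ 0 →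
        (∃ H : Subgroup (G ⧸ (Q : Subgroup G)), Nat.card H = 2 ^ k) →
        ∃ H : Subgroup G, Nat.card H = 24 / i := by
      intro k i hki hi ⟨Hb, hHb⟩
      have hib : Hb.index = i :=
        card_index_helper (by rw [hcq, ← hki, mul_comm]) Hb hHb
      have hsurj : Function.Surjective (QuotientGroup.mk' (Q : Subgroup G)) :=
        QuotientGroup.mk'_surjective _
      have hidx : (Hb.comap (QuotientGroup.mk' (Q : Subgroup G))).index = i := by
        rw [Hb.index_comap_of_surjective hsurj, hib]
      refine ⟨Hb.comap (QuotientGroup.mk' (Q : Subgroup G)), ?_⟩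
      have := (Hb.comap (QuotientGroup.mk' (Q : Subgroup G))).card_mul_index
      rw [hidx, h24] at this
      have hidvd : i ∣ 8 := ⟨2 ^ k, by rw [mul_comm]; omega⟩
      have hile : i ≤ 8 := Nat.le_of_dvd (by norm_num) hidvd
      have hipos : 0 < i := Nat.pos_of_ne_zero hi
      interval_cases i <;> omega
    constructor
    · -- order 6 : comap of order-2 subgroup, index 4
      have := get 1 4 (by norm_num) (by norm_num)
        (exists_subgroup_card Nat.prime_two (by rw [hcq]; norm_num))
      simpa using this
    · left
      have := get 2 2 (by norm_num) (by norm_num)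
        (exists_subgroup_card Nat.prime_two (by rw [hcq]; norm_num))
      simpa using this
  · -- four Sylow 3-subgroups
    have hNidx : ∀ R : Sylow 3 G, (Subgroup.normalizer (R : Set G)).index = 4 := by
      intro R
      rw [← R.card_eq_index_normalizer, hn4]
    have hNcard : ∀ R : Sylow 3 G, Nat.card (Subgroup.normalizer (R : Set G)) = 6 := by
      intro R
      have := (Subgroup.normalizer (R : Set G)).card_mul_index
      rw [hNidx R, h24] at this
      omega
    refine ⟨⟨Subgroup.normalizer (Q : Set G), hNcard Q⟩, ?_⟩
    set φ := MulAction.toPermHom G (Sylow 3 G) with hφ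
    set K := φ.ker with hK
    have hKle : ∀ R : Sylow 3 G, K ≤ Subgroup.normalizer (R : Set G) := by
      intro R g hg
      rw [← Sylow.stabilizer_eq_normalizer]
      have : φ g = 1 := hg
      have : (φ g) R = R := by rw [this]; rfl
      exact this
    have hKdvd : Nat.card K ∣ 6 := (hNcard Q) ▸ Subgroup.card_dvd_of_le (hKle Q)
    have hK1 : 0 < Nat.card K := Nat.card_pos
    -- if 3 divides card K we get a contradiction
    have h3K : ¬ (3 ∣ Nat.card K) := by
      intro h3
      haveI : Fintype K := Fintype.ofFinite _
      obtain ⟨k, hk⟩ := exists_prime_orderOf_dvd_card (G := K) 3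
        (by rwa [← Nat.card_eq_fintype_card])
      have hg3 : orderOf (k : G) = 3 := by rw [Subgroup.orderOf_coe, hk]
      have hmem : ∀ R : Sylow 3 G, (k : G) ∈ (R : Subgroup G) := by
        intro R
        have hgN : (k : G) ∈ Subgroup.normalizer (R : Set G) := hKle R k.2
        set NR := Subgroup.normalizer (R : Set G)
        have hRle : (R : Subgroup G) ≤ NR := Subgroup.le_normalizer
        set R' := (R : Subgroup G).subgroupOf NR with hR'
        have hcR' : Nat.card R' = 3 := by
          rw [← hsyl R]
          exact Nat.card_congr (Subgroup.subgroupOfEquivOfLe hRle).toEquiv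
        haveI : Finite NR := Subtype.finite
        have hcqR : Nat.card (↥NR ⧸ R') = 2 := by
          have := Subgroup.card_eq_card_quotient_mul_card_subgroup R'
          rw [hNcard R, hcR'] at this
          omega
        set g' : NR := ⟨(k : G), hgN⟩ with hg'
        have hog' : orderOf g' = 3 := by rw [Subgroup.orderOf_mk, hg3]
        haveI : R'.Normal := Subgroup.normal_in_normalizer
        have h1 : orderOf ((QuotientGroup.mk' R') g') ∣ 3 := by
          have := orderOf_map_dvd (QuotientGroup.mk' R') g'
          rwa [hog'] at this
        have h2 : orderOf ((QuotientGroup.mk' R') g') ∣ 2 := by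
          have := orderOf_dvd_natCard ((QuotientGroup.mk' R') g')
          rwa [hcqR] at this
        have hord1 : orderOf ((QuotientGroup.mk' R') g') = 1 :=
          Nat.dvd_one.mp (by simpa using Nat.dvd_gcd h2 h1)
        have heq1 : (QuotientGroup.mk' R') g' = 1 := orderOf_eq_one_iff.mp hord1
        have hginR' : g' ∈ R' := (QuotientGroup.eq_one_iff g').mp heq1
        exact (Subgroup.mem_subgroupOf).mp hginR'
      have hzle : ∀ R : Sylow 3 G, Subgroup.zpowers (k : G) ≤ (R : Subgroup G) :=
        fun R => Subgroup.zpowers_le.mpr (hmem R)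
      have hzeq : ∀ R : Sylow 3 G, Subgroup.zpowers (k : G) = (R : Subgroup G) := by
        intro R
        refine Subgroup.eq_of_le_of_card_ge (hzle R) ?_
        rw [hsyl R, Nat.card_zpowers, hg3]
      have : ∀ R S : Sylow 3 G, R = S := by
        intro R S
        exact Sylow.ext ((hzeq R).symm.trans (hzeq S))
      have : Nat.card (Sylow 3 G) = 1 :=
        Nat.card_eq_one_iff_unique.mpr ⟨⟨this⟩, ⟨Q⟩⟩
      omega
    -- card K ∈ {1, 2}
    have hK12 : Nat.card K = 1 ∨ Nat.card K = 2 := by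
      have h6 : Nat.card K ≤ 6 := Nat.le_of_dvd (by norm_num) hKdvd
      interval_cases h : Nat.card K <;>
        first
          | omega
          | (rw [h] at h3K; exact absurd (by norm_num) h3K)
          | (rw [h] at hKdvd; norm_num at hKdvd)
    rcases hK12 with hKc | hKc
    · -- φ injective, pull back the alternating group
      left
      have hinj : Function.Injective φ :=
        φ.ker_eq_bot_iff.mp (Subgroup.card_eq_one.mp hKc)
      haveI : Fintype (Sylow 3 G) := Fintype.ofFinite _
      haveI : DecidableEq (Sylow 3 G) := Classical.decEq _
      have hfin4 : Fintype.card (Sylow 3 G) = 4 := by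
        rw [← Nat.card_eq_fintype_card, hn4]
      haveI : Nontrivial (Sylow 3 G) := by
        apply Fintype.one_lt_card_iff_nontrivial.mp
        omega
      have hfact : Nat.factorial 4 = 24 := by decide
      have hcperm : Nat.card (Equiv.Perm (Sylow 3 G)) = 24 := by
        rw [Nat.card_eq_fintype_card, Fintype.card_perm, hfin4, hfact]
      have halt : Nat.card (alternatingGroup (Sylow 3 G)) = 12 := by
        have := two_mul_card_alternatingGroup (α := Sylow 3 G)
        rw [Fintype.card_perm, hfin4, hfact] at this
        rw [Nat.card_eq_fintype_card]
        omega
      have hsurj : Function.Surjective φ := by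
        have := (Nat.bijective_iff_injective_and_card φ).mpr ⟨hinj, by rw [hcperm, h24]⟩
        exact this.2
      have hidxalt : (alternatingGroup (Sylow 3 G)).index = 2 :=
        card_index_helper (by rw [hcperm]) _ halt
      have hidx : ((alternatingGroup (Sylow 3 G)).comap φ).index = 2 := by
        rw [(alternatingGroup (Sylow 3 G)).index_comap_of_surjective hsurj, hidxalt]
      refine ⟨(alternatingGroup (Sylow 3 G)).comap φ, ?_⟩
      have := ((alternatingGroup (Sylow 3 G)).comap φ).card_mul_index
      rw [hidx, h24] at this
      omega
    · right
      exact ⟨K, φ.normal_ker, hKc⟩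

set_option maxHeartbeats 3000000 in
lemma list_classify (l : List ℕ) (h1 : ∀ x ∈ l, 2 ≤ x) (h2 : l.prod = 24) :
    l = [24] ∨ l = [2,12] ∨ l = [12,2] ∨ l = [3,8] ∨ l = [8,3] ∨ l = [4,6] ∨ l = [6,4] ∨
    l = [2,2,6] ∨ l = [2,6,2] ∨ l = [6,2,2] ∨ l = [2,3,4] ∨ l = [2,4,3] ∨ l = [3,2,4] ∨
    l = [3,4,2] ∨ l = [4,2,3] ∨ l = [4,3,2] ∨
    l = [2,2,2,3] ∨ l = [2,2,3,2] ∨ l = [2,3,2,2] ∨ l = [3,2,2,2] := by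
  rcases l with _ | ⟨a, _ | ⟨b, _ | ⟨c, _ | ⟨d, _ | ⟨e, t⟩⟩⟩⟩⟩
  · simp at h2
  · simp only [List.prod_cons, List.prod_nil, mul_one] at h2
    subst h2
    tauto
  · have ha := h1 a (by simp)
    have hb := h1 b (by simp)
    simp only [List.prod_cons, List.prod_nil, mul_one] at h2
    have hble : a * 2 ≤ 24 := h2 ▸ Nat.mul_le_mul_left a hb
    have : a ≤ 12 := by omega
    interval_cases a <;> simp <;> omega
  · have ha := h1 a (by simp)
    have hb := h1 b (by simp)
    have hc := h1 c (by simp)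
    simp only [List.prod_cons, List.prod_nil, mul_one] at h2
    have h4 : 2 * 2 ≤ b * c := Nat.mul_le_mul hb hc
    have hble : a * (2 * 2) ≤ 24 := h2 ▸ Nat.mul_le_mul_left a h4
    have : a ≤ 6 := by omega
    interval_cases a <;>
      (have hble2 : b * 2 ≤ b * c := Nat.mul_le_mul_left b hc
       have : b ≤ 12 := by omega
       interval_cases b <;> simp <;> omega)
  · have ha := h1 a (by simp)
    have hb := h1 b (by simp)
    have hc := h1 c (by simp)
    have hd := h1 d (by simp)
    simp only [List.prod_cons, List.prod_nil, mul_one] at h2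
    have h4 : 2 * (2 * 2) ≤ b * (c * d) :=
      Nat.mul_le_mul hb (Nat.mul_le_mul hc hd)
    have hble : a * (2 * (2 * 2)) ≤ 24 := h2 ▸ Nat.mul_le_mul_left a h4
    have : a ≤ 3 := by omega
    interval_cases a <;>
      (have h5 : 2 * 2 ≤ c * d := Nat.mul_le_mul hc hd
       have hble2 : b * (2 * 2) ≤ b * (c * d) := Nat.mul_le_mul_left b h5
       have : b ≤ 6 := by omega
       interval_cases b <;>
         (have hble3 : c * 2 ≤ c * d := Nat.mul_le_mul_left c hd
          have : c ≤ 12 := by omega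
          interval_cases c <;> simp <;> omega))
  · have ha := h1 a (by simp)
    have hb := h1 b (by simp)
    have hc := h1 c (by simp)
    have hd := h1 d (by simp)
    have he := h1 e (by simp)
    have ht : 0 < t.prod := List.prod_pos (fun x hx => by
      have := h1 x (by simp [hx]); omega)
    simp only [List.prod_cons] at h2
    have : 2 * (2 * (2 * (2 * (2 * 1)))) ≤ a * (b * (c * (d * (e * t.prod)))) :=
      Nat.mul_le_mul ha (Nat.mul_le_mul hb (Nat.mul_le_mul hc
        (Nat.mul_le_mul hd (Nat.mul_le_mul he ht))))
    omega

lemma exfac_of_card24 (h24 : Nat.card G = 24) (l : List ℕ)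
    (h1 : ∀ x ∈ l, 2 ≤ x) (h2 : l.prod = 24) : ExFac G l := by
  haveI : Finite G := finite_of_card h24 (by norm_num)
  obtain ⟨⟨H6, hH6⟩, hdi⟩ := key24 h24
  obtain ⟨H2, hH2'⟩ := exists_subgroup_card (G := G) Nat.prime_two (n := 1) (by rw [h24]; norm_num)
  obtain ⟨H3, hH3'⟩ := exists_subgroup_card (G := G) Nat.prime_three (n := 1) (by rw [h24]; norm_num)
  obtain ⟨H4, hH4'⟩ := exists_subgroup_card (G := G) Nat.prime_two (n := 2) (by rw [h24]; norm_num)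
  obtain ⟨H8, hH8'⟩ := exists_subgroup_card (G := G) Nat.prime_two (n := 3) (by rw [h24]; norm_num)
  have hH2 : Nat.card H2 = 2 := by simpa using hH2'
  have hH3 : Nat.card H3 = 3 := by simpa using hH3'
  have hH4 : Nat.card H4 = 4 := by simpa using hH4'
  have hH8 : Nat.card H8 = 8 := by simpa using hH8'
  have hquot : ∀ N : Subgroup G, N.Normal → Nat.card N = 2 →
      Nat.card (G ⧸ N) = 12 := by
    intro N hNn hN2
    haveI := hNn
    have := Subgroup.card_eq_card_quotient_mul_card_subgroup N
    rw [h24, hN2] at this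
    omega
  rcases list_classify l h1 h2 with rfl|rfl|rfl|rfl|rfl|rfl|rfl|rfl|rfl|rfl|rfl|rfl|rfl|rfl|rfl|rfl|rfl|rfl|rfl|rfl
  · exact exfac_single h24
  · simpa using exfacR' (m := 2) (n := 12) (by omega) H2 hH2 (exfac_single hH2)
  · exact exfacL' (m := 2) (n := 12) (by omega) H2 hH2 (exfac_single hH2)
  · simpa using exfacR' (m := 3) (n := 8) (by omega) H3 hH3 (exfac_single hH3)
  · exact exfacL' (m := 3) (n := 8) (by omega) H3 hH3 (exfac_single hH3)
  · exact exfacL' (m := 6) (n := 4) (by omega) H6 hH6 (exfac_single hH6)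
  · simpa using exfacR' (m := 6) (n := 4) (by omega) H6 hH6 (exfac_single hH6)
  · simpa using exfacR' (m := 4) (n := 6) (by omega) H4 hH4 (ex4 hH4)
  · -- [2,6,2]
    rcases hdi with ⟨H12, h12⟩ | ⟨N, hNn, hN2⟩
    · exact exfacL' (m := 12) (n := 2) (by omega) H12 h12 (ex12a h12)
    · haveI := hNn
      have := exfacN_cons N (ex12a (hquot N hNn hN2))
      rwa [hN2] at this
  · exact exfacL' (m := 4) (n := 6) (by omega) H4 hH4 (ex4 hH4)
  · simpa using exfacR' (m := 6) (n := 4) (by omega) H6 hH6 (ex6a hH6)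
  · simpa using exfacR' (m := 8) (n := 3) (by omega) H8 hH8 (ex8a hH8)
  · simpa using exfacR' (m := 6) (n := 4) (by omega) H6 hH6 (ex6b hH6)
  · exact exfacL' (m := 8) (n := 3) (by omega) H8 hH8 (ex8b hH8)
  · exact exfacL' (m := 6) (n := 4) (by omega) H6 hH6 (ex6a hH6)
  · exact exfacL' (m := 6) (n := 4) (by omega) H6 hH6 (ex6b hH6)
  · simpa using exfacR' (m := 8) (n := 3) (by omega) H8 hH8 (ex8c hH8)
  · -- [2,2,3,2]
    rcases hdi with ⟨H12, h12⟩ | ⟨N, hNn, hN2⟩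
    · simpa using exfacR' (m := 12) (n := 2) (by omega) H12 h12 (ex12b h12)
    · haveI := hNn
      have := exfacN_snoc N (ex12b (hquot N hNn hN2))
      rw [hN2] at this
      simpa using this
  · -- [2,3,2,2]
    rcases hdi with ⟨H12, h12⟩ | ⟨N, hNn, hN2⟩
    · exact exfacL' (m := 12) (n := 2) (by omega) H12 h12 (ex12c h12)
    · haveI := hNn
      have := exfacN_cons N (ex12c (hquot N hNn hN2))
      rwa [hN2] at this
  · exact exfacL' (m := 8) (n := 3) (by omega) H8 hH8 (ex8c hH8)

end Machinery

lemma hasFactorization_of_exfac {G : Type*} [Group G] {k : ℕ} (a : Fin k → ℕ)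
    (h : ExFac G (List.ofFn a)) : HasFactorization G a := by
  obtain ⟨A, hmap, hcard, hprod⟩ := h
  have hlen : A.length = k := by
    have := congrArg List.length hmap
    simpa using this
  subst hlen
  refine ⟨A.get, ?_, ?_, ?_⟩
  · intro i
    have h1 : (List.map (fun s => Nat.card (s : Set G)) A)[(i : ℕ)]'(by simpa using i.isLt)
        = (List.ofFn a)[(i : ℕ)]'(by simpa using i.isLt) := by
      simp only [hmap]
    simpa using h1
  · rwa [List.prod_ofFn] at hcard
  · rw [List.ofFn_get]
    exact hprod


/-- Every group of order `24` is multifold-factorizable. -/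
theorem isMultifoldFactorizable_of_card_24 (G : Type*) [Group G]
    (hG : Nat.card G = 24) : IsMultifoldFactorizable G := by
  intro k _ a ha hprod
  apply hasFactorization_of_exfac
  apply exfac_of_card24 hG
  · intro x hx
    rw [List.mem_ofFn] at hx
    obtain ⟨i, rfl⟩ := hx
    exact ha i
  · rw [List.prod_ofFn, ← hprod, hG]
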